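/- Let (L, ε, ∧_ε, ∨_ε) be a canonical ℰ-lattice whose lattice of fixed points Fix ε = {a₁, a₂, …, aₙ} is finite and totally ordered. Then Aut_ℰ(L) is isomorphic, as a group, to the direct product ∏_{i=1}^{n} S'([aᵢ]), where S'([aᵢ]) is the subgroup of the symmetric group on the class [aᵢ] consisting of the permutations of [aᵢ] fixing aᵢ. -/

import Mathlib

/-- A canonical ℰ-lattice: a set `L` with a map `eps : L → L` and two associative,
commutative binary operations satisfying `a ∧ a = a ∨ a = ε a`,
the absorption laws `a ∧ (a ∨ b) = a ∨ (a ∧ b) = ε a`, and (canonicity)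
all meets and joins are fixed points of `eps`. -/
structure CELattice (L : Type*) where
  eps : L → L
  meet : L → L → L
  join : L → L → L
  meet_assoc : ∀ a b c, meet a (meet b c) = meet (meet a b) c
  join_assoc : ∀ a b c, join a (join b c) = join (join a b) c
  meet_comm : ∀ a b, meet a b = meet b a
  join_comm : ∀ a b, join a b = join b a
  meet_self : ∀ a, meet a a = eps a
  join_self : ∀ a, join a a = eps a
  meet_absorb : ∀ a b, meet a (join a b) = eps a
  join_absorb : ∀ a b, join a (meet a b) = eps a
  meet_canonical : ∀ a b, eps (meet a b) = meet a b
  join_canonical : ∀ a b, eps (join a b) = join a b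

namespace CELattice

variable {L : Type*}

/-- The set of fixed points of `eps`. -/
def Fix (E : CELattice L) : Set L := {a | E.eps a = a}

/-- The class `[a] = {b | ε b = ε a}`. -/
def cls (E : CELattice L) (a : L) : Set L := {b | E.eps b = E.eps a}

/-- The fixed points of `eps`, as a type. -/
abbrev FixT (E : CELattice L) : Type _ := {a : L // E.eps a = a}

/-- An ℰ-lattice isomorphism: a bijection commuting with `eps` and preserving
meets and joins. -/
def IsEIso {L₁ L₂ : Type*} (E₁ : CELattice L₁) (E₂ : CELattice L₂) (f : L₁ → L₂) : Prop :=
  Function.Bijective f ∧ (∀ a, f (E₁.eps a) = E₂.eps (f a)) ∧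
    (∀ a b, f (E₁.meet a b) = E₂.meet (f a) (f b)) ∧
    (∀ a b, f (E₁.join a b) = E₂.join (f a) (f b))

end CELattice

namespace CELattice

variable {L : Type*}

/-- The group `Aut_ℰ(L)` of ℰ-lattice automorphisms of a canonical ℰ-lattice,
as a subgroup of the symmetric group on `L`. -/
def EAut (E : CELattice L) : Subgroup (Equiv.Perm L) where
  carrier := {f : Equiv.Perm L | (∀ a, f (E.eps a) = E.eps (f a)) ∧
    (∀ a b, f (E.meet a b) = E.meet (f a) (f b)) ∧
    (∀ a b, f (E.join a b) = E.join (f a) (f b))}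
  one_mem' := by simp
  mul_mem' := by
    rintro f g ⟨hf1, hf2, hf3⟩ ⟨hg1, hg2, hg3⟩
    refine ⟨fun a => ?_, fun a b => ?_, fun a b => ?_⟩ <;>
      simp [Equiv.Perm.mul_apply, hg1, hg2, hg3, hf1, hf2, hf3]
  inv_mem' := by
    rintro f ⟨hf1, hf2, hf3⟩
    refine ⟨fun a => ?_, fun a b => ?_, fun a b => ?_⟩ <;>
      (apply f.injective;
       simp [hf1, hf2, hf3, Equiv.apply_symm_apply])

/-- The meet of two fixed points, as a fixed point (the lattice operation on `Fix ε`). -/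
def fixMeet (E : CELattice L) (a b : E.FixT) : E.FixT :=
  ⟨E.meet a.1 b.1, E.meet_canonical _ _⟩

/-- The join of two fixed points, as a fixed point (the lattice operation on `Fix ε`). -/
def fixJoin (E : CELattice L) (a b : E.FixT) : E.FixT :=
  ⟨E.join a.1 b.1, E.join_canonical _ _⟩

/-- The group `Aut(Fix ε)` of lattice automorphisms of the lattice of fixed points. -/
def AutFix (E : CELattice L) : Subgroup (Equiv.Perm E.FixT) where
  carrier := {σ : Equiv.Perm E.FixT | (∀ a b, σ (E.fixMeet a b) = E.fixMeet (σ a) (σ b)) ∧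
    (∀ a b, σ (E.fixJoin a b) = E.fixJoin (σ a) (σ b))}
  one_mem' := by simp
  mul_mem' := by
    rintro f g ⟨hf1, hf2⟩ ⟨hg1, hg2⟩
    refine ⟨fun a b => ?_, fun a b => ?_⟩ <;>
      simp [Equiv.Perm.mul_apply, hg1, hg2, hf1, hf2]
  inv_mem' := by
    rintro f ⟨hf1, hf2⟩
    refine ⟨fun a b => ?_, fun a b => ?_⟩ <;>
      (apply f.injective; simp [hf1, hf2, Equiv.apply_symm_apply])

/-- `S'([a])`: the subgroup of the symmetric group on the class `[a]`
consisting of the permutations fixing `a`. -/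
def Sprime (E : CELattice L) (a : L) : Subgroup (Equiv.Perm {b : L // E.eps b = E.eps a}) where
  carrier := {σ | σ ⟨a, rfl⟩ = ⟨a, rfl⟩}
  one_mem' := by simp
  mul_mem' := by
    intro f g hf hg
    simp only [Set.mem_setOf_eq] at *
    simp [Equiv.Perm.mul_apply, hg, hf]
  inv_mem' := by
    intro f hf
    simp only [Set.mem_setOf_eq] at *
    rw [Equiv.Perm.inv_eq_iff_eq, hf]

end CELattice

namespace CELattice

variable {L : Type*} (E : CELattice L)

lemma eps_eps (a : L) : E.eps (E.eps a) = E.eps a := by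
  rw [← E.meet_self a]; exact E.meet_canonical a a

lemma meet_eps_self (a : L) : E.meet a (E.eps a) = E.eps a := by
  conv_lhs => rw [← E.join_absorb a a]
  exact E.meet_absorb a _

lemma join_eps_self (a : L) : E.join a (E.eps a) = E.eps a := by
  conv_lhs => rw [← E.meet_absorb a a]
  exact E.join_absorb a _

lemma meet_idem (a b : L) : E.meet a (E.meet a b) = E.meet a b := by
  have h0 : E.join (E.meet a b) a = E.eps a := by
    rw [E.join_comm, E.join_absorb]
  have h1 : E.meet (E.meet a b) (E.eps a) = E.meet a b := by
    rw [← h0, E.meet_absorb, E.meet_canonical]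
  calc E.meet a (E.meet a b) = E.meet a (E.meet (E.meet a b) (E.eps a)) := by rw [h1]
    _ = E.meet a (E.meet (E.eps a) (E.meet a b)) := by rw [E.meet_comm (E.meet a b)]
    _ = E.meet (E.meet a (E.eps a)) (E.meet a b) := by rw [E.meet_assoc]
    _ = E.meet (E.eps a) (E.meet a b) := by rw [E.meet_eps_self]
    _ = E.meet (E.meet a b) (E.eps a) := by rw [E.meet_comm]
    _ = E.meet a b := h1

lemma join_idem (a b : L) : E.join a (E.join a b) = E.join a b := by
  have h0 : E.meet (E.join a b) a = E.eps a := by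
    rw [E.meet_comm, E.meet_absorb]
  have h1 : E.join (E.join a b) (E.eps a) = E.join a b := by
    rw [← h0, E.join_absorb, E.join_canonical]
  calc E.join a (E.join a b) = E.join a (E.join (E.join a b) (E.eps a)) := by rw [h1]
    _ = E.join a (E.join (E.eps a) (E.join a b)) := by rw [E.join_comm (E.join a b)]
    _ = E.join (E.join a (E.eps a)) (E.join a b) := by rw [E.join_assoc]
    _ = E.join (E.eps a) (E.join a b) := by rw [E.join_eps_self]
    _ = E.join (E.join a b) (E.eps a) := by rw [E.join_comm]
    _ = E.join a b := h1

lemma meet_eps_left (a b : L) : E.meet (E.eps a) b = E.meet a b := by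
  rw [← E.meet_self a, ← E.meet_assoc, E.meet_idem]

lemma join_eps_left (a b : L) : E.join (E.eps a) b = E.join a b := by
  rw [← E.join_self a, ← E.join_assoc, E.join_idem]

lemma meet_eps_eps (a b : L) : E.meet (E.eps a) (E.eps b) = E.meet a b := by
  rw [E.meet_eps_left, E.meet_comm, E.meet_eps_left, E.meet_comm]

lemma join_eps_eps (a b : L) : E.join (E.eps a) (E.eps b) = E.join a b := by
  rw [E.join_eps_left, E.join_comm, E.join_eps_left, E.join_comm]

end CELattice

namespace CELattice

variable {L : Type*} (E : CELattice L)

lemma fix_of_mem_eaut (hfin : Finite E.FixT)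
    (hchain : ∀ a b : L, E.eps a = a → E.eps b = b → E.meet a b = a ∨ E.meet a b = b)
    {f : Equiv.Perm L} (hf : f ∈ E.EAut) {a : L} (ha : E.eps a = a) : f a = a := by
  obtain ⟨hf1, hf2, hf3⟩ := hf
  letI : LinearOrder E.FixT :=
    { le := fun a b => E.meet a.1 b.1 = a.1
      le_refl := fun a => by
        show E.meet a.1 a.1 = a.1
        rw [E.meet_self, a.2]
      le_trans := fun a b c hab hbc => by
        show E.meet a.1 c.1 = a.1
        conv_lhs => rw [← hab]
        rw [← E.meet_assoc, hbc, hab]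
      le_antisymm := fun a b hab hba => by
        apply Subtype.ext
        rw [← hab, E.meet_comm, hba]
      le_total := fun a b => by
        rcases hchain a.1 b.1 a.2 b.2 with h | h
        · exact Or.inl h
        · exact Or.inr (by show E.meet b.1 a.1 = b.1; rw [E.meet_comm]; exact h)
      toDecidableLE := Classical.decRel _ }
  have hfix : ∀ x : L, E.eps x = x → E.eps (f x) = f x := fun x hx => by
    rw [← hf1, hx]
  have hinv : f⁻¹ ∈ E.EAut := E.EAut.inv_mem ⟨hf1, hf2, hf3⟩
  obtain ⟨hg1, _, _⟩ := hinv
  have hgfix : ∀ x : L, E.eps x = x → E.eps (f⁻¹ x) = f⁻¹ x := fun x hx => by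
    rw [← hg1, hx]
  let σ : E.FixT ≃o E.FixT :=
    { toFun := fun x => ⟨f x.1, hfix x.1 x.2⟩
      invFun := fun x => ⟨f⁻¹ x.1, hgfix x.1 x.2⟩
      left_inv := fun x => Subtype.ext (f.symm_apply_apply x.1)
      right_inv := fun x => Subtype.ext (f.apply_symm_apply x.1)
      map_rel_iff' := by
        intro x y
        show E.meet (f x.1) (f y.1) = f x.1 ↔ E.meet x.1 y.1 = x.1
        rw [← hf2]
        exact ⟨fun h => f.injective h, fun h => by rw [h]⟩ }
  have : σ = OrderIso.refl E.FixT := Subsingleton.elim _ _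
  have := congrArg (fun (τ : E.FixT ≃o E.FixT) => (τ ⟨a, ha⟩).1) this
  exact this

lemma eps_apply_of_mem_eaut (hfin : Finite E.FixT)
    (hchain : ∀ a b : L, E.eps a = a → E.eps b = b → E.meet a b = a ∨ E.meet a b = b)
    {f : Equiv.Perm L} (hf : f ∈ E.EAut) (b : L) : E.eps (f b) = E.eps b := by
  rw [← hf.1 b, E.fix_of_mem_eaut hfin hchain hf (E.eps_eps b)]

end CELattice

namespace CELattice

variable {L : Type*} (E : CELattice L)

/-- Assemble a family of permutations of the classes into a map `L → L`. -/
def psiFun (τ : ∀ a : E.FixT, Equiv.Perm {x : L // E.eps x = E.eps (a : L)}) : L → L :=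
  fun b => (τ ⟨E.eps b, E.eps_eps b⟩ ⟨b, (E.eps_eps b).symm⟩).1

lemma psiFun_congr (τ : ∀ a : E.FixT, Equiv.Perm {x : L // E.eps x = E.eps (a : L)})
    {a a' : E.FixT} (h : a = a') (x : L) (hx : E.eps x = E.eps (a : L)) :
    (τ a ⟨x, hx⟩).1 = (τ a' ⟨x, h ▸ hx⟩).1 := by subst h; rfl

lemma eps_psiFun (τ : ∀ a : E.FixT, Equiv.Perm {x : L // E.eps x = E.eps (a : L)}) (b : L) :
    E.eps (E.psiFun τ b) = E.eps b :=
  (τ ⟨E.eps b, E.eps_eps b⟩ ⟨b, (E.eps_eps b).symm⟩).2.trans (E.eps_eps b)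

lemma psiFun_comp (τ υ : ∀ a : E.FixT, Equiv.Perm {x : L // E.eps x = E.eps (a : L)}) (b : L) :
    E.psiFun τ (E.psiFun υ b) = E.psiFun (fun a => τ a * υ a) b := by
  have ha : (⟨E.eps (E.psiFun υ b), E.eps_eps _⟩ : E.FixT) = ⟨E.eps b, E.eps_eps b⟩ :=
    Subtype.ext (E.eps_psiFun υ b)
  show (τ ⟨E.eps (E.psiFun υ b), E.eps_eps _⟩ ⟨E.psiFun υ b, (E.eps_eps _).symm⟩).1 = _
  rw [E.psiFun_congr τ ha]
  have hx : (⟨E.psiFun υ b, ha ▸ (E.eps_eps (E.psiFun υ b)).symm⟩ :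
      {x : L // E.eps x = E.eps ((⟨E.eps b, E.eps_eps b⟩ : E.FixT) : L)}) =
      υ ⟨E.eps b, E.eps_eps b⟩ ⟨b, (E.eps_eps b).symm⟩ := Subtype.ext rfl
  rw [hx]
  rfl

lemma psiFun_one (b : L) :
    E.psiFun (fun a => (1 : Equiv.Perm {x : L // E.eps x = E.eps (a : L)})) b = b := rfl

/-- Assemble a family of permutations of the classes into a permutation of `L`. -/
def psiPerm (τ : ∀ a : E.FixT, Equiv.Perm {x : L // E.eps x = E.eps (a : L)}) :
    Equiv.Perm L where
  toFun := E.psiFun τ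
  invFun := E.psiFun (fun a => (τ a)⁻¹)
  left_inv := fun b => by
    rw [E.psiFun_comp]
    simp only [inv_mul_cancel]
    exact E.psiFun_one b
  right_inv := fun b => by
    rw [E.psiFun_comp]
    simp only [mul_inv_cancel]
    exact E.psiFun_one b

lemma psiFun_fixed (τ : ∀ a : E.FixT, Equiv.Perm {x : L // E.eps x = E.eps (a : L)})
    (hτ : ∀ a : E.FixT, τ a ∈ E.Sprime (a : L)) {x : L} (hx : E.eps x = x) :
    E.psiFun τ x = x := by
  show (τ ⟨E.eps x, E.eps_eps x⟩ ⟨x, (E.eps_eps x).symm⟩).1 = x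
  have h1 : (⟨x, (E.eps_eps x).symm⟩ :
      {y : L // E.eps y = E.eps ((⟨E.eps x, E.eps_eps x⟩ : E.FixT) : L)}) =
      ⟨(⟨E.eps x, E.eps_eps x⟩ : E.FixT), rfl⟩ := Subtype.ext hx.symm
  rw [h1, hτ ⟨E.eps x, E.eps_eps x⟩]
  exact hx

lemma psiPerm_mem_eaut (τ : ∀ a : E.FixT, Equiv.Perm {x : L // E.eps x = E.eps (a : L)})
    (hτ : ∀ a : E.FixT, τ a ∈ E.Sprime (a : L)) : E.psiPerm τ ∈ E.EAut := by
  have hfix : ∀ {x : L}, E.eps x = x → E.psiPerm τ x = x := fun hx => E.psiFun_fixed τ hτ hx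
  refine ⟨fun a => ?_, fun a b => ?_, fun a b => ?_⟩
  · rw [hfix (E.eps_eps a)]
    exact (E.eps_psiFun τ a).symm
  · rw [hfix (E.meet_canonical a b)]
    show E.meet a b = E.meet (E.psiFun τ a) (E.psiFun τ b)
    rw [← E.meet_eps_eps (E.psiFun τ a), E.eps_psiFun, E.eps_psiFun, E.meet_eps_eps]
  · rw [hfix (E.join_canonical a b)]
    show E.join a b = E.join (E.psiFun τ a) (E.psiFun τ b)
    rw [← E.join_eps_eps (E.psiFun τ a), E.eps_psiFun, E.eps_psiFun, E.join_eps_eps]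

end CELattice

open CELattice in
/-- Corollary 2 (2.1): if the lattice of fixed points of a canonical ℰ-lattice is finite
and fully (totally) ordered, then `Aut_ℰ(L) ≅ ∏_{i=1}^{n} S'([aᵢ])`. -/
theorem eaut_iso_of_finite_chain_fix {L : Type*} [Nonempty L] (E : CELattice L)
    (hfin : Finite E.FixT)
    (hchain : ∀ a b : L, E.eps a = a → E.eps b = b → E.meet a b = a ∨ E.meet a b = b) :
    Nonempty (EAut E ≃* ∀ a : E.FixT, Sprime E (a : L)) := by
  classical
  have heps : ∀ (f : E.EAut) (x : L), E.eps ((f : Equiv.Perm L) x) = E.eps x :=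
    fun f x => E.eps_apply_of_mem_eaut hfin hchain f.2 x
  refine ⟨{
    toFun := fun f => fun a =>
      ⟨(f : Equiv.Perm L).subtypePerm (fun x => by rw [heps f x]),
       Subtype.ext (E.fix_of_mem_eaut hfin hchain f.2 a.2)⟩
    invFun := fun σ => ⟨E.psiPerm (fun a => (σ a : Equiv.Perm _)),
       E.psiPerm_mem_eaut _ (fun a => (σ a).2)⟩
    left_inv := fun f => by
      apply Subtype.ext; apply Equiv.ext; intro b; rfl
    right_inv := fun σ => by
      funext a
      apply Subtype.ext; apply Equiv.ext; intro x
      apply Subtype.ext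
      have ha : (⟨E.eps x.1, E.eps_eps x.1⟩ : E.FixT) = a :=
        Subtype.ext (x.2.trans a.2)
      show E.psiFun (fun a => (σ a).1) x.1 = _
      rw [show E.psiFun (fun a => (σ a).1) x.1 =
        ((σ ⟨E.eps x.1, E.eps_eps x.1⟩).1 ⟨x.1, (E.eps_eps x.1).symm⟩).1 from rfl]
      rw [E.psiFun_congr (fun a => (σ a).1) ha]
    map_mul' := fun f g => by
      funext a
      apply Subtype.ext; apply Equiv.ext; intro x
      apply Subtype.ext
      rfl }⟩
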